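/- Let f : ℝ² → ℝ be twice continuously differentiable on an open neighborhood of a point p, with both first partial derivatives of f vanishing at p. Let ε > 0 and let γ : (−ε, ε) → ℝ² satisfy γ(0) = p, γ differentiable at 0, and f(γ(t)) = 0 for all t ∈ (−ε, ε). Then the Hessian quadratic form of f at p annihilates v = γ′(0), i.e. ∂²_{xx}f(p)·v₁² + 2∂²_{xy}f(p)·v₁v₂ + ∂²_{yy}f(p)·v₂² = 0. -/

import Mathlib

open Filter Metric Asymptotics Set

lemma aux_derivFst {g : ℝ × ℝ → ℝ} {q : ℝ × ℝ} (hg : DifferentiableAt ℝ g q) :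
    HasDerivAt (fun x => g (x, q.2)) (fderiv ℝ g q (1, 0)) q.1 := by
  have h1 : HasDerivAt (fun x : ℝ => (x, q.2)) ((1 : ℝ), (0 : ℝ)) q.1 :=
    HasDerivAt.prodMk (hasDerivAt_id q.1) (hasDerivAt_const q.1 q.2)
  exact hg.hasFDerivAt.comp_hasDerivAt q.1 h1

lemma aux_derivSnd {g : ℝ × ℝ → ℝ} {q : ℝ × ℝ} (hg : DifferentiableAt ℝ g q) :
    HasDerivAt (fun y => g (q.1, y)) (fderiv ℝ g q (0, 1)) q.2 := by
  have h1 : HasDerivAt (fun y : ℝ => (q.1, y)) ((0 : ℝ), (1 : ℝ)) q.2 :=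
    HasDerivAt.prodMk (hasDerivAt_const q.2 q.1) (hasDerivAt_id q.2)
  exact hg.hasFDerivAt.comp_hasDerivAt q.2 h1

lemma aux_deriv2Fst {F : ℝ × ℝ → (ℝ × ℝ) →L[ℝ] ℝ} {q : ℝ × ℝ}
    {B : (ℝ × ℝ) →L[ℝ] (ℝ × ℝ) →L[ℝ] ℝ} (hF : HasFDerivAt F B q) (u : ℝ × ℝ) :
    HasDerivAt (fun x => F (x, q.2) u) (B (1, 0) u) q.1 := by
  have h2 : HasFDerivAt (fun q' => F q' u) ((ContinuousLinearMap.apply ℝ ℝ u).comp B) q :=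
    (ContinuousLinearMap.apply ℝ ℝ u).hasFDerivAt.comp q hF
  have h1 : HasDerivAt (fun x : ℝ => (x, q.2)) ((1 : ℝ), (0 : ℝ)) q.1 :=
    HasDerivAt.prodMk (hasDerivAt_id q.1) (hasDerivAt_const q.1 q.2)
  exact h2.comp_hasDerivAt q.1 h1

lemma aux_deriv2Snd {F : ℝ × ℝ → (ℝ × ℝ) →L[ℝ] ℝ} {q : ℝ × ℝ}
    {B : (ℝ × ℝ) →L[ℝ] (ℝ × ℝ) →L[ℝ] ℝ} (hF : HasFDerivAt F B q) (u : ℝ × ℝ) :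
    HasDerivAt (fun y => F (q.1, y) u) (B (0, 1) u) q.2 := by
  have h2 : HasFDerivAt (fun q' => F q' u) ((ContinuousLinearMap.apply ℝ ℝ u).comp B) q :=
    (ContinuousLinearMap.apply ℝ ℝ u).hasFDerivAt.comp q hF
  have h1 : HasDerivAt (fun y : ℝ => (q.1, y)) ((0 : ℝ), (1 : ℝ)) q.2 :=
    HasDerivAt.prodMk (hasDerivAt_const q.2 q.1) (hasDerivAt_id q.2)
  exact h2.comp_hasDerivAt q.2 h1

set_option maxHeartbeats 1000000 in
lemma aux_core (f : ℝ × ℝ → ℝ) (p : ℝ × ℝ) (s : Set (ℝ × ℝ))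
    (hs : IsOpen s) (hps : p ∈ s) (hf : ContDiffOn ℝ 2 f s)
    (hfp : fderiv ℝ f p = 0)
    (ε : ℝ) (hε : 0 < ε) (γ : ℝ → ℝ × ℝ) (hγ0 : γ 0 = p)
    (hγd : DifferentiableAt ℝ γ 0)
    (hγz : ∀ t ∈ Set.Ioo (-ε) ε, f (γ t) = 0) :
    fderiv ℝ (fderiv ℝ f) p (deriv γ 0) (deriv γ 0) = 0 := by
  set v := deriv γ 0 with hv
  set B := fderiv ℝ (fderiv ℝ f) p with hBdef
  have hfp0 : f p = 0 := by
    have := hγz 0 ⟨by linarith, hε⟩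
    rwa [hγ0] at this
  have hdiff : ∀ y ∈ s, DifferentiableAt ℝ f y := fun y hy =>
    (hf.contDiffAt (hs.mem_nhds hy)).differentiableAt two_ne_zero
  have hC2 : ContDiffAt ℝ 2 f p := hf.contDiffAt (hs.mem_nhds hps)
  have hfd1 : ContDiffAt ℝ 1 (fderiv ℝ f) p := hC2.fderiv_right (by norm_num)
  have hBd : HasFDerivAt (fderiv ℝ f) B p := (hfd1.differentiableAt one_ne_zero).hasFDerivAt
  obtain ⟨K, t₀, ht₀, hlip⟩ := hfd1.exists_lipschitzOnWith
  obtain ⟨r, hr, hrsub⟩ : ∃ r > 0, closedBall p r ⊆ s ∩ t₀ :=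
    Metric.nhds_basis_closedBall.mem_iff.1 (Filter.inter_mem (hs.mem_nhds hps) ht₀)
  -- bound on the derivative
  have hbound : ∀ y ∈ closedBall p r, ‖fderiv ℝ f y‖ ≤ K * dist y p := by
    intro y hy
    have h1 := hlip.dist_le_mul y (hrsub hy).2 p (hrsub (mem_closedBall_self hr.le)).2
    rwa [dist_eq_norm, hfp, sub_zero] at h1
  -- the curve expansion
  have hd : (fun t => γ t - p - t • v) =o[nhds 0] (fun t : ℝ => t) := by
    have h2 := hγd.hasDerivAt
    rw [hasDerivAt_iff_isLittleO] at h2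
    simpa [hγ0] using h2
  have hcont : Filter.Tendsto γ (nhds 0) (nhds p) := by
    have := hγd.continuousAt.tendsto; rwa [hγ0] at this
  -- Step A : f (p + t v) = o(t²) along 𝓝[>] 0
  have hγO : (fun t : ℝ => γ t - p) =O[nhds 0] (fun t : ℝ => t) := by
    have h2 : (fun t : ℝ => t • v) =O[nhds 0] (fun t : ℝ => t) := by
      apply Asymptotics.isBigO_of_le' (c := ‖v‖)
      intro t; rw [norm_smul]; simp [mul_comm]
    have h3 := hd.isBigO.add h2
    apply h3.congr_left
    intro t
    show γ t - p - t • v + t • v = γ t - p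
    abel
  set ρ : ℝ → ℝ := fun t => ‖γ t - p‖ + |t| * ‖v‖ with hρdef
  have hρO : ρ =O[nhds 0] (fun t : ℝ => t) := by
    apply IsBigO.add hγO.norm_left
    apply Asymptotics.isBigO_of_le' (c := ‖v‖)
    intro t; simp [abs_mul, mul_comm, abs_norm]
  have hρ0 : Filter.Tendsto ρ (nhds 0) (nhds 0) := by
    have h1 : Filter.Tendsto (fun t : ℝ => ‖γ t - p‖) (nhds 0) (nhds 0) := by
      have := (hcont.sub_const p).norm
      simpa using this
    have h2 : Filter.Tendsto (fun t : ℝ => |t| * ‖v‖) (nhds 0) (nhds 0) := by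
      have := (continuous_abs.tendsto 0).mul_const ‖v‖
      simpa using this
    simpa using h1.add h2
  have hdo : (fun t : ℝ => p + t • v - γ t) =o[nhds 0] (fun t : ℝ => t) := by
    have := hd.neg_left
    apply this.congr_left
    intro t
    show -(γ t - p - t • v) = p + t • v - γ t
    abel
  -- points eventually in the ball
  have hev : ∀ᶠ t in nhdsWithin 0 (Set.Ioi 0),
      ‖f (p + t • v)‖ ≤ ‖(K * ρ t) * ‖p + t • v - γ t‖‖ := by
    have e1 : ∀ᶠ t in nhdsWithin 0 (Set.Ioi 0), t ∈ Set.Ioo (-ε) ε := by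
      apply eventually_nhdsWithin_of_eventually_nhds
      have : Set.Ioo (-ε) ε ∈ nhds (0:ℝ) := Ioo_mem_nhds (by linarith) hε
      exact this
    have e2 : ∀ᶠ t in nhdsWithin 0 (Set.Ioi 0), ρ t ≤ r := by
      apply eventually_nhdsWithin_of_eventually_nhds
      exact hρ0.eventually (eventually_le_nhds hr)
    filter_upwards [e1, e2] with t ht1 ht2
    -- both points lie in closedBall p (ρ t)
    have hγball : γ t ∈ closedBall p (ρ t) := by
      rw [mem_closedBall, dist_eq_norm]
      have : (0:ℝ) ≤ |t| * ‖v‖ := by positivity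
      simp only [hρdef]; linarith
    have hpball : p + t • v ∈ closedBall p (ρ t) := by
      rw [mem_closedBall, dist_eq_norm, add_sub_cancel_left, norm_smul]
      have : (0:ℝ) ≤ ‖γ t - p‖ := norm_nonneg _
      simp only [hρdef, Real.norm_eq_abs]; linarith
    have hsub : closedBall p (ρ t) ⊆ closedBall p r := closedBall_subset_closedBall ht2
    have mvt := Convex.norm_image_sub_le_of_norm_fderiv_le
      (f := f) (s := closedBall p (ρ t)) (C := K * ρ t)
      (fun y hy => hdiff y ((hrsub (hsub hy)).1))
      (fun y hy => le_trans (hbound y (hsub hy)) (by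
        have := mem_closedBall.1 hy
        have hK : (0:ℝ) ≤ K := K.2
        nlinarith))
      (convex_closedBall p (ρ t)) hγball hpball
    have hz : f (γ t) = 0 := hγz t ht1
    rw [hz, sub_zero] at mvt
    calc ‖f (p + t • v)‖ ≤ (K * ρ t) * ‖p + t • v - γ t‖ := mvt
    _ ≤ ‖(K * ρ t) * ‖p + t • v - γ t‖‖ := le_abs_self _
  have hA : (fun t : ℝ => f (p + t • v)) =o[nhdsWithin 0 (Set.Ioi 0)] fun t => t ^ 2 := by
    have hprod : (fun t : ℝ => (K * ρ t) * ‖p + t • v - γ t‖)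
        =o[nhdsWithin 0 (Set.Ioi 0)] fun t => t * t := by
      have h1 : (fun t : ℝ => K * ρ t) =O[nhdsWithin 0 (Set.Ioi 0)] (fun t : ℝ => t) :=
        ((hρO.const_mul_left K).mono nhdsWithin_le_nhds)
      have h2 : (fun t : ℝ => ‖p + t • v - γ t‖) =o[nhdsWithin 0 (Set.Ioi 0)] (fun t : ℝ => t) :=
        (hdo.norm_left).mono nhdsWithin_le_nhds
      exact h1.mul_isLittleO h2
    have hOO : (fun t : ℝ => f (p + t • v)) =O[nhdsWithin 0 (Set.Ioi 0)]
        fun t : ℝ => (K * ρ t) * ‖p + t • v - γ t‖ :=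
      Asymptotics.isBigO_iff.2 ⟨1, by filter_upwards [hev] with t ht; simpa using ht⟩
    have := hOO.trans_isLittleO hprod
    apply this.congr_right
    intro t; ring
  -- Step B : Taylor expansion along a straight line
  obtain ⟨c, hc, hcr⟩ : ∃ c : ℝ, 0 < c ∧ c * ‖v‖ < r := by
    refine ⟨r / (2 * (‖v‖ + 1)), by positivity, ?_⟩
    rw [div_mul_eq_mul_div, div_lt_iff₀ (by positivity)]
    nlinarith [norm_nonneg v, hr]
  set w : ℝ × ℝ := c • v with hwdef
  have hwr : ‖w‖ < r := by
    rw [hwdef, norm_smul, Real.norm_eq_abs, abs_of_pos hc]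
    exact hcr
  have hint : interior (closedBall p r) = ball p r := interior_closedBall p hr.ne'
  have hv0 : p + (0 : ℝ × ℝ) ∈ interior (closedBall p r) := by
    rw [hint]; simpa using (mem_ball_self hr : p ∈ ball p r)
  have hw0 : p + (0 : ℝ × ℝ) + w ∈ interior (closedBall p r) := by
    rw [hint, mem_ball, dist_eq_norm]
    simpa using hwr
  have hders : ∀ y ∈ interior (closedBall p r), HasFDerivAt f (fderiv ℝ f y) y := fun y hy =>
    (hdiff y ((hrsub (interior_subset hy)).1)).hasFDerivAt
  have hBW : HasFDerivWithinAt (fderiv ℝ f) B (interior (closedBall p r)) p :=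
    hBd.hasFDerivWithinAt
  have T := (convex_closedBall p r).taylor_approx_two_segment hders
      (mem_closedBall_self hr.le) hBW hv0 hw0
  have T2 : (fun h : ℝ => f (p + h • w) - (h ^ 2 / 2) • B w w) =o[nhdsWithin 0 (Set.Ioi 0)]
      fun h => h ^ 2 := by
    apply T.congr_left
    intro h
    simp only [smul_zero, add_zero, hfp, hfp0, ContinuousLinearMap.zero_apply, map_zero,
      sub_zero]
  have hmulc : Filter.Tendsto (fun h : ℝ => h * c) (nhdsWithin 0 (Set.Ioi 0))
      (nhdsWithin 0 (Set.Ioi 0)) := by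
    have h1 : Filter.Tendsto (fun h : ℝ => h * c) (nhds 0) (nhds 0) := by
      simpa using (tendsto_id.mul_const c : Filter.Tendsto _ (nhds (0:ℝ)) (nhds (0 * c)))
    apply tendsto_nhdsWithin_of_tendsto_nhds_of_eventually_within _
      (h1.mono_left nhdsWithin_le_nhds)
    filter_upwards [self_mem_nhdsWithin] with h hh
    exact mul_pos hh hc
  have hAc := hA.comp_tendsto hmulc
  have hA2 : (fun h : ℝ => f (p + h • w)) =o[nhdsWithin 0 (Set.Ioi 0)] fun h => h ^ 2 := by
    have hbig : (fun h : ℝ => (h * c) ^ 2) =O[nhdsWithin 0 (Set.Ioi 0)] fun h => h ^ 2 := by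
      apply Asymptotics.isBigO_of_le' (c := c ^ 2)
      intro h
      have : ‖(h * c) ^ 2‖ = c ^ 2 * ‖h ^ 2‖ := by
        rw [Real.norm_eq_abs, Real.norm_eq_abs, abs_pow, abs_pow, abs_mul,
          mul_pow, abs_of_pos hc]
        ring
      exact le_of_eq this
    have h3 := hAc.trans_isBigO hbig
    apply h3.congr_left
    intro h
    show f (p + (h * c) • v) = f (p + h • w)
    rw [hwdef, smul_smul, mul_comm]
  have hQ : (fun h : ℝ => (h ^ 2 / 2) • B w w) =o[nhdsWithin 0 (Set.Ioi 0)]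
      fun h => h ^ 2 := by
    have h4 := hA2.sub T2
    apply h4.congr_left
    intro h
    show f (p + h • w) - (f (p + h • w) - (h ^ 2 / 2) • B w w) = (h ^ 2 / 2) • B w w
    ring
  have hBww : B w w = 0 := by
    by_contra hne
    rw [Asymptotics.isLittleO_iff] at hQ
    have hpos : 0 < |B w w| / 4 := by positivity
    obtain ⟨h, hineq, hh⟩ := ((hQ hpos).and self_mem_nhdsWithin).exists
    have hh0 : (0:ℝ) < h := hh
    simp only [smul_eq_mul, Real.norm_eq_abs] at hineq
    have e1 : |h ^ 2 / 2 * B w w| = h ^ 2 / 2 * |B w w| := by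
      rw [abs_mul, abs_of_pos (by positivity)]
    have e2 : |h ^ 2| = h ^ 2 := abs_of_pos (by positivity)
    rw [e1, e2] at hineq
    have habs : 0 < |B w w| := abs_pos.2 hne
    nlinarith [pow_pos hh0 2]
  have hBcc : c * (c * B v v) = 0 := by
    rw [← hBww, hwdef]
    simp [map_smul, smul_eq_mul]
  rcases mul_eq_zero.mp hBcc with h | h
  · exact absurd h hc.ne'
  · rcases mul_eq_zero.mp h with h' | h'
    · exact absurd h' hc.ne'
    · exact h'

theorem stmt13 (f : ℝ × ℝ → ℝ) (p : ℝ × ℝ) (s : Set (ℝ × ℝ))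
    (hs : IsOpen s) (hps : p ∈ s) (hf : ContDiffOn ℝ 2 f s)
    (hx : deriv (fun x => f (x, p.2)) p.1 = 0)
    (hy : deriv (fun y => f (p.1, y)) p.2 = 0)
    (ε : ℝ) (hε : 0 < ε) (γ : ℝ → ℝ × ℝ) (hγ0 : γ 0 = p)
    (hγd : DifferentiableAt ℝ γ 0)
    (hγz : ∀ t ∈ Set.Ioo (-ε) ε, f (γ t) = 0) :
    deriv (fun x => deriv (fun x' => f (x', p.2)) x) p.1 * (deriv γ 0).1 ^ 2
      + 2 * deriv (fun y => deriv (fun x => f (x, y)) p.1) p.2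
          * (deriv γ 0).1 * (deriv γ 0).2
      + deriv (fun y => deriv (fun y' => f (p.1, y')) y) p.2 * (deriv γ 0).2 ^ 2 = 0 := by
  have hdiff : ∀ y ∈ s, DifferentiableAt ℝ f y := fun y hy =>
    (hf.contDiffAt (hs.mem_nhds hy)).differentiableAt two_ne_zero
  have hC2 : ContDiffAt ℝ 2 f p := hf.contDiffAt (hs.mem_nhds hps)
  have hfd1 : ContDiffAt ℝ 1 (fderiv ℝ f) p := hC2.fderiv_right (by norm_num)
  set B := fderiv ℝ (fderiv ℝ f) p with hBdef
  have hBd : HasFDerivAt (fderiv ℝ f) B p := (hfd1.differentiableAt one_ne_zero).hasFDerivAt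
  -- the first derivative vanishes at p
  have hx1 : fderiv ℝ f p (1, 0) = 0 := by
    rw [← (aux_derivFst (hdiff p hps)).deriv]; exact hx
  have hy1 : fderiv ℝ f p (0, 1) = 0 := by
    rw [← (aux_derivSnd (hdiff p hps)).deriv]; exact hy
  have hfp : fderiv ℝ f p = 0 := by
    apply ContinuousLinearMap.ext
    intro u
    have hu : u = u.1 • ((1:ℝ), (0:ℝ)) + u.2 • ((0:ℝ), (1:ℝ)) := by
      simp [Prod.ext_iff]
    rw [hu, map_add, map_smul, map_smul, hx1, hy1]
    simp
  -- identify the three second partial derivatives as entries of B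
  have hmemx : {x : ℝ | (x, p.2) ∈ s} ∈ nhds p.1 := by
    have hcx : Continuous fun x : ℝ => (x, p.2) := continuous_id.prodMk continuous_const
    exact (hs.preimage hcx).mem_nhds (by simpa using hps)
  have hmemy : {y : ℝ | (p.1, y) ∈ s} ∈ nhds p.2 := by
    have hcy : Continuous fun y : ℝ => (p.1, y) := continuous_const.prodMk continuous_id
    exact (hs.preimage hcy).mem_nhds (by simpa using hps)
  have hxx : deriv (fun x => deriv (fun x' => f (x', p.2)) x) p.1 = B (1, 0) (1, 0) := by
    have hev : (fun x => deriv (fun x' => f (x', p.2)) x) =ᶠ[nhds p.1]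
        fun x => fderiv ℝ f (x, p.2) (1, 0) := by
      filter_upwards [hmemx] with x hx' using (aux_derivFst (hdiff _ hx')).deriv
    rw [hev.deriv_eq]
    exact (aux_deriv2Fst hBd ((1:ℝ), (0:ℝ))).deriv
  have hxy : deriv (fun y => deriv (fun x => f (x, y)) p.1) p.2 = B (0, 1) (1, 0) := by
    have hev : (fun y => deriv (fun x => f (x, y)) p.1) =ᶠ[nhds p.2]
        fun y => fderiv ℝ f (p.1, y) (1, 0) := by
      filter_upwards [hmemy] with y hy' using (aux_derivFst (hdiff _ hy')).deriv
    rw [hev.deriv_eq]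
    exact (aux_deriv2Snd hBd ((1:ℝ), (0:ℝ))).deriv
  have hyy : deriv (fun y => deriv (fun y' => f (p.1, y')) y) p.2 = B (0, 1) (0, 1) := by
    have hev : (fun y => deriv (fun y' => f (p.1, y')) y) =ᶠ[nhds p.2]
        fun y => fderiv ℝ f (p.1, y) (0, 1) := by
      filter_upwards [hmemy] with y hy' using (aux_derivSnd (hdiff _ hy')).deriv
    rw [hev.deriv_eq]
    exact (aux_deriv2Snd hBd ((0:ℝ), (1:ℝ))).deriv
  -- symmetry of the second derivative
  have hsymm : B (1, 0) (0, 1) = B (0, 1) (1, 0) :=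
    second_derivative_symmetric_of_eventually
      (by filter_upwards [hs.mem_nhds hps] with y hy' using (hdiff y hy').hasFDerivAt)
      hBd _ _
  -- the quadratic form annihilates v
  have hcore : B (deriv γ 0) (deriv γ 0) = 0 :=
    aux_core f p s hs hps hf hfp ε hε γ hγ0 hγd hγz
  set v := deriv γ 0 with hvdef
  have hvexp : B v v = B (1, 0) (1, 0) * v.1 ^ 2
      + (B (1, 0) (0, 1) + B (0, 1) (1, 0)) * (v.1 * v.2)
      + B (0, 1) (0, 1) * v.2 ^ 2 := by
    have hv : v = v.1 • ((1:ℝ), (0:ℝ)) + v.2 • ((0:ℝ), (1:ℝ)) := by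
      simp [Prod.ext_iff]
    conv_lhs => rw [hv]
    simp only [map_add, map_smul, ContinuousLinearMap.add_apply,
      ContinuousLinearMap.smul_apply, smul_eq_mul]
    ring
  rw [hvexp, hsymm] at hcore
  rw [hxx, hxy, hyy]
  linear_combination hcore
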